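/- Let T be a tree with diameter 3 and central vertices x and y (the two adjacent non-pendant vertices). If S is a proper convex set of TT̄ with both S ∩ V(T) and S ∩ V(T̄) nonempty, then S ∩ V(T) is contained in N_T[x] or in N_T[y]; in particular |S ∩ V(T)| ≤ Δ(T) + 1. -/

import Mathlib

open SimpleGraph

/-- Adjacency of the complementary prism: copies of `G` and `Gᶜ` joined by a perfect matching. -/
def prismAdj {V : Type*} (G : SimpleGraph V) : V ⊕ V → V ⊕ V → Prop
  | Sum.inl a, Sum.inl b => G.Adj a b
  | Sum.inr a, Sum.inr b => Gᶜ.Adj a b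
  | Sum.inl a, Sum.inr b => a = b
  | Sum.inr a, Sum.inl b => a = b

/-- The complementary prism `G G̅` of a graph `G`. -/
def compPrism {V : Type*} (G : SimpleGraph V) : SimpleGraph (V ⊕ V) where
  Adj := prismAdj G
  symm := by
    constructor
    rintro (a | a) (b | b) h
    · exact h.symm
    · exact h.symm
    · exact h.symm
    · exact h.symm
  loopless := by
    constructor
    rintro (a | a) h
    · exact G.loopless.irrefl a h
    · exact Gᶜ.loopless.irrefl a h

/-- `w` lies on some shortest `u,v`-path (geodesic) of `H`. -/
def inInterval {V : Type*} (H : SimpleGraph V) (u v w : V) : Prop :=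
  ∃ p : H.Walk u v, p.IsPath ∧ p.length = H.dist u v ∧ w ∈ p.support

/-- A set of vertices is geodesically convex. -/
def IsGeoConvex {V : Type*} (H : SimpleGraph V) (S : Set V) : Prop :=
  ∀ u ∈ S, ∀ v ∈ S, ∀ w, inInterval H u v w → w ∈ S

/-- The geodesic convex hull: the smallest convex set containing `S`. -/
def geoHull {V : Type*} (H : SimpleGraph V) (S : Set V) : Set V :=
  ⋂₀ {C | IsGeoConvex H C ∧ S ⊆ C}

/-- The convexity number: maximum cardinality of a proper convex set. -/
noncomputable def convexityNumber {V : Type*} (H : SimpleGraph V) : ℕ :=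
  sSup {n | ∃ S : Set V, IsGeoConvex H S ∧ S ≠ Set.univ ∧ S.ncard = n}

/-- The diameter of a graph. -/
noncomputable def graphDiam {V : Type*} (H : SimpleGraph V) : ℕ :=
  sSup {d | ∃ u v : V, H.dist u v = d}

/-- The eccentricity of a vertex. -/
noncomputable def graphEcc {V : Type*} (H : SimpleGraph V) (u : V) : ℕ :=
  sSup {d | ∃ v : V, H.dist u v = d}

/-- The degree of a vertex. -/
noncomputable def vdeg {V : Type*} (H : SimpleGraph V) (v : V) : ℕ :=
  (H.neighborSet v).ncard

/-- The maximum degree. -/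
noncomputable def maxDeg {V : Type*} (H : SimpleGraph V) : ℕ :=
  sSup {d | ∃ v : V, vdeg H v = d}

/-- The number of pendant neighbours of a vertex. -/
noncomputable def pendCount {V : Type*} (H : SimpleGraph V) (w : V) : ℕ :=
  {v ∈ H.neighborSet w | vdeg H v = 1}.ncard

section TreeAux
variable {V : Type*} {T : SimpleGraph V}

lemma tree_dist_eq (hT : T.IsTree) {u v : V} (p : T.Walk u v) (hp : p.IsPath) :
    T.dist u v = p.length := by
  obtain ⟨q, hq, hql⟩ := (p.reachable).exists_path_of_dist
  have := (hT.existsUnique_path u v).unique hq hp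
  rw [← hql, this]

lemma dist_le_diam {u v : V} [Fintype V] (hd : graphDiam T = 3) : T.dist u v ≤ 3 := by
  have hb : BddAbove {d | ∃ u v : V, T.dist u v = d} := by
    have : {d | ∃ u v : V, T.dist u v = d} = Set.range (fun p : V × V => T.dist p.1 p.2) := by
      ext d; simp [Set.mem_range, Prod.exists]
    rw [this]; exact (Set.finite_range _).bddAbove
  have := le_csSup hb (⟨u, v, rfl⟩ : T.dist u v ∈ {d | ∃ u v : V, T.dist u v = d})
  rwa [show sSup {d | ∃ u v : V, T.dist u v = d} = 3 from hd] at this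

lemma noP4 [Fintype V] (hT : T.IsTree) (hd : graphDiam T = 3) {a b c d e : V}
    (h1 : T.Adj a b) (h2 : T.Adj b c) (h3 : T.Adj c d) (h4 : T.Adj d e)
    (hac : a ≠ c) (had : a ≠ d) (hae : a ≠ e) (hbd : b ≠ d) (hbe : b ≠ e) (hce : c ≠ e) :
    False := by
  have hp : (Walk.cons h1 (Walk.cons h2 (Walk.cons h3 h4.toWalk))).IsPath := by
    simp [Walk.isPath_def, h1.ne, h2.ne, h3.ne, h4.ne, hac, had, hae, hbd, hbe, hce]
  have := tree_dist_eq hT _ hp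
  have hle := dist_le_diam (T := T) (u := a) (v := e) hd
  simp [Walk.length_cons, Adj.toWalk] at this
  omega

lemma noTriangle (hT : T.IsTree) {a b c : V}
    (h1 : T.Adj a b) (h2 : T.Adj b c) (h3 : T.Adj a c) : False := by
  have hp1 : (h3.toWalk).IsPath := by simp [Walk.isPath_def, h3.ne]
  have hp2 : (Walk.cons h1 h2.toWalk).IsPath := by
    simp [Walk.isPath_def, h1.ne, h2.ne, h3.ne]
  have e1 := tree_dist_eq hT _ hp1
  have e2 := tree_dist_eq hT _ hp2
  simp only [Walk.length_cons, Walk.length_nil, SimpleGraph.Adj.toWalk] at e1 e2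
  omega

lemma no4cycle (hT : T.IsTree) {a b c d : V}
    (h1 : T.Adj a b) (h2 : T.Adj b c) (h3 : T.Adj c d) (h4 : T.Adj d a)
    (hac : a ≠ c) (hbd : b ≠ d) : False := by
  have hp1 : (Walk.cons h1 h2.toWalk).IsPath := by
    simp [Walk.isPath_def, h1.ne, h2.ne, hac]
  have hp2 : (Walk.cons h4.symm h3.symm.toWalk).IsPath := by
    simp [Walk.isPath_def, h4.ne', h3.ne', hac]
  have := (hT.existsUnique_path a c).unique hp1 hp2
  have hs := congrArg Walk.support this
  simp [Walk.support_cons] at hs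
  exact hbd hs

end TreeAux

section WalkDecomp
variable {W : Type*} {H : SimpleGraph W}

lemma walk_two {a b : W} (p : H.Walk a b) (h : p.length = 2) :
    ∃ c, H.Adj a c ∧ H.Adj c b := by
  cases p with
  | nil => simp at h
  | cons h1 q =>
    cases q with
    | nil => simp at h
    | cons h2 r =>
      simp [Walk.length_cons] at h
      obtain rfl := r.eq_of_length_eq_zero h.length_eq_zero
      exact ⟨_, h1, h2⟩

lemma walk_three {a b : W} (p : H.Walk a b) (h : p.length = 3) :
    ∃ c d, H.Adj a c ∧ H.Adj c d ∧ H.Adj d b := by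
  cases p with
  | nil => simp at h
  | cons h1 q =>
    simp [Walk.length_cons] at h
    obtain ⟨c, hc1, hc2⟩ := walk_two q h
    exact ⟨_, _, h1, hc1, hc2⟩

lemma dist_cases {a b : W} (q : H.Walk a b) (h : H.dist a b ≤ 2) :
    a = b ∨ H.Adj a b ∨ ∃ c, H.Adj a c ∧ H.Adj c b := by
  obtain ⟨p, hp⟩ := q.reachable.exists_walk_length_eq_dist
  have hl : p.length ≤ 2 := by omega
  cases p with
  | nil => exact Or.inl rfl
  | cons h1 r =>
    cases r with
    | nil => exact Or.inr (Or.inl h1)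
    | cons h2 s =>
      simp [Walk.length_cons] at hl
      obtain rfl := s.eq_of_length_eq_zero (by simpa [Walk.length_eq_zero_iff] using hl)
      exact Or.inr (Or.inr ⟨_, h1, h2⟩)

end WalkDecomp

section DoubleStar
variable {V : Type*} [Fintype V] {T : SimpleGraph V}

lemma exists_other_neighbor {y : V} (h : 2 ≤ vdeg T y) (c : V) :
    ∃ w, T.Adj y w ∧ w ≠ c := by
  obtain ⟨b, hb, hbc⟩ := Set.exists_ne_of_one_lt_ncard (by exact h) c
  exact ⟨b, hb, hbc⟩

lemma adj_xy (hT : T.IsTree) (hd : graphDiam T = 3) {x y : V} (hxy : T.Adj x y)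
    (hx : 2 ≤ vdeg T x) (hy : 2 ≤ vdeg T y) (z : V) (hzx : z ≠ x) (hzy : z ≠ y) :
    T.Adj z x ∨ T.Adj z y := by
  by_contra hc
  push_neg at hc
  obtain ⟨h1, h2⟩ := hc
  obtain ⟨y', hy'1, hy'2⟩ := exists_other_neighbor hy x
  obtain ⟨x', hx'1, hx'2⟩ := exists_other_neighbor hx y
  have hr : T.Reachable z x := hT.isConnected z x
  obtain ⟨p, hp⟩ := hr.exists_walk_length_eq_dist
  have hdle : T.dist z x ≤ 3 := dist_le_diam hd
  have hd0 : T.dist z x ≠ 0 := by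
    rw [SimpleGraph.dist_ne_zero_iff_ne_and_reachable]; exact ⟨hzx, hr⟩
  have hd1 : T.dist z x ≠ 1 := fun h => h1 (SimpleGraph.dist_eq_one_iff_adj.mp h)
  have : p.length = 2 ∨ p.length = 3 := by omega
  rcases this with h | h
  · obtain ⟨w, hzw, hwx⟩ := walk_two p h
    have hwy : w ≠ y := by rintro rfl; exact h2 hzw
    refine noP4 hT hd hy'1.symm hxy.symm hwx.symm hzw.symm hy'2 ?_ ?_ hwy.symm hzy.symm hzx.symm
    · rintro rfl; exact noTriangle hT hwx hxy hy'1.symm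
    · rintro rfl; exact h2 hy'1.symm
  · obtain ⟨w, w2, hzw, hww2, hw2x⟩ := walk_three p h
    have hwx : w ≠ x := by rintro rfl; exact h1 hzw
    by_cases hw2y : w2 = y
    · subst hw2y
      refine noP4 hT hd hx'1.symm hxy hww2.symm hzw.symm hx'2 ?_ ?_ hwx.symm hzx.symm hzy.symm
      · rintro rfl; exact noTriangle hT hww2 hxy.symm hx'1.symm
      · rintro rfl; exact h1 hx'1.symm
    · refine noP4 hT hd hxy.symm hw2x.symm hww2.symm hzw.symm (Ne.symm hw2y) ?_ hzy.symm hwx.symm hzx.symm ?_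
      · rintro rfl; exact h2 hzw
      · rintro rfl; exact h1 hw2x

lemma leaf_lemma (hT : T.IsTree) (hd : graphDiam T = 3) {x y : V} (hxy : T.Adj x y)
    (hy : 2 ≤ vdeg T y) {z : V} (hzx : T.Adj z x) (hzy : z ≠ y) :
    ∀ w, T.Adj z w → w = x := by
  intro w hw
  by_contra hne
  by_cases hwy : w = y
  · subst hwy; exact noTriangle hT hzx hxy hw
  · obtain ⟨y', hy'1, hy'2⟩ := exists_other_neighbor hy x
    by_cases hA : y' = z
    · subst hA; exact noTriangle hT hzx hxy hy'1.symm
    by_cases hB : y' = w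
    · subst hB
      exact no4cycle hT hw.symm hzx hxy hy'1 hne hzy
    · exact noP4 hT hd hy'1.symm hxy.symm hzx.symm hw hy'2 hA hB
        (Ne.symm hzy) (Ne.symm hwy) (Ne.symm hne)

lemma doubleStar (hT : T.IsTree) (hd : graphDiam T = 3) {x y : V} (hxy : T.Adj x y)
    (hx : 2 ≤ vdeg T x) (hy : 2 ≤ vdeg T y) (z : V) :
    z = x ∨ z = y ∨ (T.Adj z x ∧ ∀ w, T.Adj z w → w = x) ∨
      (T.Adj z y ∧ ∀ w, T.Adj z w → w = y) := by
  by_cases h1 : z = x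
  · exact Or.inl h1
  by_cases h2 : z = y
  · exact Or.inr (Or.inl h2)
  rcases adj_xy hT hd hxy hx hy z h1 h2 with h | h
  · exact Or.inr (Or.inr (Or.inl ⟨h, leaf_lemma hT hd hxy hy h h2⟩))
  · exact Or.inr (Or.inr (Or.inr ⟨h, leaf_lemma hT hd hxy.symm hx h h1⟩))

end DoubleStar

section Prism
variable {V : Type*} {T : SimpleGraph V}

lemma prism_ll {a b : V} : (compPrism T).Adj (Sum.inl a) (Sum.inl b) ↔ T.Adj a b := Iff.rfl

lemma prism_rr {a b : V} :
    (compPrism T).Adj (Sum.inr a) (Sum.inr b) ↔ a ≠ b ∧ ¬ T.Adj a b := by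
  show Tᶜ.Adj a b ↔ _
  rw [compl_adj]

lemma prism_lr {a b : V} : (compPrism T).Adj (Sum.inl a) (Sum.inr b) ↔ a = b := Iff.rfl

lemma prism_rl {a b : V} : (compPrism T).Adj (Sum.inr a) (Sum.inl b) ↔ a = b := Iff.rfl

end Prism

section Conv
variable {W : Type*} {H : SimpleGraph W} {S : Set W}

lemma walk_two' {a b : W} (p : H.Walk a b) (h : p.length = 2) :
    ∃ c, H.Adj a c ∧ H.Adj c b := by
  cases p with
  | nil => simp at h
  | cons h1 q =>
    cases q with
    | nil => simp at h
    | cons h2 r =>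
      simp [Walk.length_cons] at h
      obtain rfl := r.eq_of_length_eq_zero h.length_eq_zero
      exact ⟨_, h1, h2⟩

lemma dist_cases' {a b : W} (q : H.Walk a b) (h : H.dist a b ≤ 2) :
    a = b ∨ H.Adj a b ∨ ∃ c, H.Adj a c ∧ H.Adj c b := by
  obtain ⟨p, hp⟩ := q.reachable.exists_walk_length_eq_dist
  have hl : p.length ≤ 2 := by omega
  cases p with
  | nil => exact Or.inl rfl
  | cons h1 r =>
    cases r with
    | nil => exact Or.inr (Or.inl h1)
    | cons h2 s =>
      simp [Walk.length_cons] at hl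
      obtain rfl := s.eq_of_length_eq_zero (by simpa [Walk.length_eq_zero_iff] using hl)
      exact Or.inr (Or.inr ⟨_, h1, h2⟩)

lemma conv2 (hS : IsGeoConvex H S) {a b c : W} (ha : a ∈ S) (hb : b ∈ S)
    (h1 : H.Adj a c) (h2 : H.Adj c b) (hne : a ≠ b) (hnadj : ¬H.Adj a b) : c ∈ S := by
  have hp : (Walk.cons h1 h2.toWalk).IsPath := by
    simp [Walk.isPath_def, h1.ne, h2.ne, hne]
  have hdle : H.dist a b ≤ 2 := by
    simpa using SimpleGraph.dist_le (Walk.cons h1 h2.toWalk)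
  have h0 : H.dist a b ≠ 0 := by
    rw [SimpleGraph.dist_ne_zero_iff_ne_and_reachable]
    exact ⟨hne, (Walk.cons h1 h2.toWalk).reachable⟩
  have h1' : H.dist a b ≠ 1 := fun h => hnadj (SimpleGraph.dist_eq_one_iff_adj.mp h)
  have hlen : (Walk.cons h1 h2.toWalk).length = H.dist a b := by
    simp only [Walk.length_cons, Walk.length_nil, SimpleGraph.Adj.toWalk]
    omega
  exact hS a ha b hb c ⟨_, hp, hlen, by simp⟩

lemma dist_eq_three {a b c d : W} (h1 : H.Adj a c) (h2 : H.Adj c d) (h3 : H.Adj d b)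
    (hne : a ≠ b) (hnadj : ¬H.Adj a b)
    (hmid : ∀ e, H.Adj a e → H.Adj e b → False) : H.dist a b = 3 := by
  have hle : H.dist a b ≤ 3 := by
    simpa using SimpleGraph.dist_le (Walk.cons h1 (Walk.cons h2 h3.toWalk))
  have h0 : H.dist a b ≠ 0 := by
    rw [SimpleGraph.dist_ne_zero_iff_ne_and_reachable]
    exact ⟨hne, (Walk.cons h1 (Walk.cons h2 h3.toWalk)).reachable⟩
  have hgt : ¬ H.dist a b ≤ 2 := by
    intro hle2
    rcases dist_cases' (Walk.cons h1 (Walk.cons h2 h3.toWalk)) hle2 with rfl | h | ⟨e, he1, he2⟩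
    · exact hne rfl
    · exact hnadj h
    · exact hmid e he1 he2
  omega

lemma conv3 (hS : IsGeoConvex H S) {a b c d : W} (ha : a ∈ S) (hb : b ∈ S)
    (h1 : H.Adj a c) (h2 : H.Adj c d) (h3 : H.Adj d b)
    (had : a ≠ d) (hcb : c ≠ b) (hne : a ≠ b) (hd3 : H.dist a b = 3) :
    c ∈ S ∧ d ∈ S := by
  have hp : (Walk.cons h1 (Walk.cons h2 h3.toWalk)).IsPath := by
    simp [Walk.isPath_def, h1.ne, h2.ne, h3.ne, had, hcb, hne]
  have hlen : (Walk.cons h1 (Walk.cons h2 h3.toWalk)).length = H.dist a b := by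
    simp only [Walk.length_cons, Walk.length_nil, SimpleGraph.Adj.toWalk]
    omega
  exact ⟨hS a ha b hb c ⟨_, hp, hlen, by simp⟩, hS a ha b hb d ⟨_, hp, hlen, by simp⟩⟩

end Conv

lemma key {V : Type*} [Fintype V] {T : SimpleGraph V} (hT : T.IsTree) (hd : graphDiam T = 3)
    {x y : V} (hxy : T.Adj x y) (hx : 2 ≤ vdeg T x) (hy : 2 ≤ vdeg T y)
    {S : Set (V ⊕ V)} (hS : IsGeoConvex (compPrism T) S)
    {u v : V} (hu1 : T.Adj u x) (hu2 : ∀ w, T.Adj u w → w = x)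
    (hv1 : T.Adj v y) (hv2 : ∀ w, T.Adj v w → w = y)
    (hU : Sum.inl u ∈ S) (hV : Sum.inl v ∈ S) : S = Set.univ := by
  have hxyne : x ≠ y := hxy.ne
  have hux : u ≠ x := hu1.ne
  have hvy : v ≠ y := hv1.ne
  have huy : u ≠ y := by
    rintro rfl
    obtain ⟨w, hw, hwx⟩ := exists_other_neighbor hy x
    exact hwx (hu2 w hw)
  have hvx : v ≠ x := by
    rintro rfl
    obtain ⟨w, hw, hwy⟩ := exists_other_neighbor hx y
    exact hwy (hv2 w hw)
  have huv : u ≠ v := by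
    rintro rfl
    exact hxyne (hv2 x hu1)
  have hnuv : ¬T.Adj u v := fun h => hvx (hu2 v h)
  -- distance 3 between the two leaves in the prism
  have hd3 : (compPrism T).dist (Sum.inl u) (Sum.inl v) = 3 := by
    refine dist_eq_three (prism_ll.mpr hu1) (prism_ll.mpr hxy) (prism_ll.mpr hv1.symm)
      (by simp [huv]) (fun h => hnuv (prism_ll.mp h)) ?_
    rintro (w | w) hw1 hw2
    · have h' : T.Adj w v := prism_ll.mp hw2
      rw [hu2 w (prism_ll.mp hw1)] at h'
      exact hxyne (hv2 x h'.symm)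
    · obtain rfl := prism_lr.mp hw1
      exact huv (prism_rl.mp hw2)
  have pair1 := conv3 hS hU hV (prism_ll.mpr hu1) (prism_ll.mpr hxy) (prism_ll.mpr hv1.symm)
    (by simp [huy]) (by simp [Ne.symm hvx]) (by simp [huv]) hd3
  have pair2 := conv3 hS hU hV (prism_lr.mpr rfl) (prism_rr.mpr ⟨huv, hnuv⟩)
    (prism_rl.mpr rfl) (by simp) (by simp) (by simp [huv]) hd3
  have hIx : Sum.inr x ∈ S := by
    refine conv2 hS pair1.1 pair2.2 (prism_lr.mpr rfl)
      (prism_rr.mpr ⟨Ne.symm hvx, fun h => hxyne (hv2 x h.symm)⟩)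
      (by simp) (fun h => hvx (prism_lr.mp h).symm)
  have hIy : Sum.inr y ∈ S := by
    refine conv2 hS pair1.2 pair2.1 (prism_lr.mpr rfl)
      (prism_rr.mpr ⟨Ne.symm huy, fun h => hxyne (hu2 y h.symm).symm⟩)
      (by simp) (fun h => huy (prism_lr.mp h).symm)
  -- leaves of x
  have hRx : ∀ z, T.Adj z x → (∀ w, T.Adj z w → w = x) → Sum.inr z ∈ S := by
    intro z hz1 hz2
    have hzy : z ≠ y := by
      rintro rfl
      obtain ⟨w, hw, hwx⟩ := exists_other_neighbor hy x
      exact hwx (hz2 w hw)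
    have hzv : z ≠ v := by
      rintro rfl
      exact hxyne (hv2 x hz1)
    refine conv2 hS hIy pair2.2
      (prism_rr.mpr ⟨Ne.symm hzy, fun h => (Ne.symm hxyne) (hz2 y h.symm)⟩)
      (prism_rr.mpr ⟨hzv, fun h => hvx (hz2 v h)⟩)
      (by simp [Ne.symm hvy]) (fun h => (prism_rr.mp h).2 hv1.symm)
  have hLx : ∀ z, T.Adj z x → (∀ w, T.Adj z w → w = x) → Sum.inl z ∈ S := by
    intro z hz1 hz2
    exact conv2 hS pair1.1 (hRx z hz1 hz2) (prism_ll.mpr hz1.symm) (prism_lr.mpr rfl)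
      (by simp) (fun h => hz1.ne (prism_lr.mp h).symm)
  -- leaves of y
  have hRy : ∀ z, T.Adj z y → (∀ w, T.Adj z w → w = y) → Sum.inr z ∈ S := by
    intro z hz1 hz2
    have hzx : z ≠ x := by
      rintro rfl
      obtain ⟨w, hw, hwy⟩ := exists_other_neighbor hx y
      exact hwy (hz2 w hw)
    have hzu : z ≠ u := by
      rintro rfl
      exact (Ne.symm hxyne) (hu2 y hz1)
    refine conv2 hS hIx pair2.1
      (prism_rr.mpr ⟨Ne.symm hzx, fun h => hxyne (hz2 x h.symm)⟩)
      (prism_rr.mpr ⟨hzu, fun h => huy (hz2 u h)⟩)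
      (by simp [Ne.symm hux]) (fun h => (prism_rr.mp h).2 hu1.symm)
  have hLy : ∀ z, T.Adj z y → (∀ w, T.Adj z w → w = y) → Sum.inl z ∈ S := by
    intro z hz1 hz2
    exact conv2 hS pair1.2 (hRy z hz1 hz2) (prism_ll.mpr hz1.symm) (prism_lr.mpr rfl)
      (by simp) (fun h => hz1.ne (prism_lr.mp h).symm)
  rw [Set.eq_univ_iff_forall]
  rintro (z | z)
  · rcases doubleStar hT hd hxy hx hy z with rfl | rfl | ⟨h1, h2⟩ | ⟨h1, h2⟩
    · exact pair1.1
    · exact pair1.2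
    · exact hLx z h1 h2
    · exact hLy z h1 h2
  · rcases doubleStar hT hd hxy hx hy z with rfl | rfl | ⟨h1, h2⟩ | ⟨h1, h2⟩
    · exact hIx
    · exact hIy
    · exact hRx z h1 h2
    · exact hRy z h1 h2

theorem stmt18 {V : Type*} [Fintype V] (T : SimpleGraph V) (hT : T.IsTree)
    (hd : graphDiam T = 3) (x y : V) (hxy : T.Adj x y)
    (hx : 2 ≤ vdeg T x) (hy : 2 ≤ vdeg T y)
    (S : Set (V ⊕ V)) (hS : IsGeoConvex (compPrism T) S) (hSp : S ≠ Set.univ)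
    (hM : ∃ a : V, Sum.inl a ∈ S) (hN : ∃ a : V, Sum.inr a ∈ S) :
    ({a : V | Sum.inl a ∈ S} ⊆ insert x (T.neighborSet x) ∨
      {a : V | Sum.inl a ∈ S} ⊆ insert y (T.neighborSet y)) ∧
    {a : V | Sum.inl a ∈ S}.ncard ≤ maxDeg T + 1 := by
  have hkey : ∀ u v : V, T.Adj u x → (∀ w, T.Adj u w → w = x) →
      T.Adj v y → (∀ w, T.Adj v w → w = y) → Sum.inl u ∈ S → Sum.inl v ∈ S → False :=
    fun u v h1 h2 h3 h4 h5 h6 => hSp (key hT hd hxy hx hy hS h1 h2 h3 h4 h5 h6)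
  have hmain : {a : V | Sum.inl a ∈ S} ⊆ insert x (T.neighborSet x) ∨
      {a : V | Sum.inl a ∈ S} ⊆ insert y (T.neighborSet y) := by
    by_cases hcx : {a : V | Sum.inl a ∈ S} ⊆ insert x (T.neighborSet x)
    · exact Or.inl hcx
    · right
      rw [Set.not_subset] at hcx
      obtain ⟨a, haS, hax⟩ := hcx
      have hleafa : T.Adj a y ∧ ∀ w, T.Adj a w → w = y := by
        rcases doubleStar hT hd hxy hx hy a with rfl | rfl | ⟨h1, h2⟩ | h
        · exact absurd (Set.mem_insert _ _) hax
        · exact absurd (Set.mem_insert_of_mem _ ((T.mem_neighborSet _ _).mpr hxy)) hax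
        · exact absurd (Set.mem_insert_of_mem _ ((T.mem_neighborSet _ _).mpr h1.symm)) hax
        · exact h
      intro b hbS
      rcases doubleStar hT hd hxy hx hy b with rfl | rfl | ⟨h1, h2⟩ | ⟨h1, h2⟩
      · exact Set.mem_insert_of_mem _ ((T.mem_neighborSet _ _).mpr hxy.symm)
      · exact Set.mem_insert _ _
      · exact (hkey b a h1 h2 hleafa.1 hleafa.2 hbS haS).elim
      · exact Set.mem_insert_of_mem _ ((T.mem_neighborSet _ _).mpr h1.symm)
  refine ⟨hmain, ?_⟩
  have hcard : ∀ c : V, {a : V | Sum.inl a ∈ S} ⊆ insert c (T.neighborSet c) →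
      {a : V | Sum.inl a ∈ S}.ncard ≤ maxDeg T + 1 := by
    intro c hsub
    have h1 : {a : V | Sum.inl a ∈ S}.ncard ≤ (insert c (T.neighborSet c)).ncard :=
      Set.ncard_le_ncard hsub (Set.toFinite _)
    have h2 : (insert c (T.neighborSet c)).ncard ≤ (T.neighborSet c).ncard + 1 :=
      Set.ncard_insert_le _ _
    have h3 : vdeg T c ≤ maxDeg T := by
      have hb : BddAbove {d | ∃ v : V, vdeg T v = d} := by
        have he : {d | ∃ v : V, vdeg T v = d} = Set.range (vdeg T) := by
          ext; simp [Set.mem_range]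
        rw [he]; exact (Set.finite_range _).bddAbove
      exact le_csSup hb ⟨c, rfl⟩
    simp only [vdeg] at h3
    omega
  rcases hmain with h | h
  · exact hcard x h
  · exact hcard y h
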